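/- Let X and Y be locally compact Hausdorff spaces and let T : C₀(X)⁺ → C₀(Y)⁺ be a bijection such that for all f, g ∈ C₀(X)⁺ one has ‖T(f+g)‖ = ‖T(f)+T(g)‖ and ‖T(f·g)‖ = ‖T(f)·T(g)‖. Then there exists a homeomorphism τ : Y → X such that T(f)(y) = f(τ(y)) for all f ∈ C₀(X)⁺ and all y ∈ Y. -/

import Mathlib

set_option linter.unusedSectionVars false
set_option linter.unusedVariables false

open scoped ZeroAtInfty
open Filter ZeroAtInftyContinuousMap

section Helpers

variable {Z : Type*} [TopologicalSpace Z]

theorem my_ev_abs_le_norm (f : C₀(Z, ℝ)) (z : Z) : |f z| ≤ ‖f‖ := by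
  calc |f z| = ‖f.toBCF z‖ := rfl
  _ ≤ ‖f.toBCF‖ := BoundedContinuousFunction.norm_coe_le_norm _ _
  _ = ‖f‖ := norm_toBCF_eq_norm

theorem my_ev_le_norm (f : C₀(Z, ℝ)) (z : Z) : f z ≤ ‖f‖ :=
  (le_abs_self _).trans (my_ev_abs_le_norm f z)

theorem my_norm_le (f : C₀(Z, ℝ)) {c : ℝ} (hc : 0 ≤ c) (h : ∀ z, |f z| ≤ c) : ‖f‖ ≤ c := by
  rw [← norm_toBCF_eq_norm]
  exact BoundedContinuousFunction.norm_le hc |>.2 h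

theorem my_norm_le_of_nonneg (f : C₀(Z, ℝ)) {c : ℝ} (hc : 0 ≤ c) (hf : ∀ z, 0 ≤ f z)
    (h : ∀ z, f z ≤ c) : ‖f‖ ≤ c :=
  my_norm_le f hc fun z => by rw [abs_of_nonneg (hf z)]; exact h z

theorem my_norm_nonneg (f : C₀(Z, ℝ)) : 0 ≤ ‖f‖ := norm_nonneg f

/-- norm is monotone on nonneg functions -/
theorem my_norm_mono {f g : C₀(Z, ℝ)} (hf : ∀ z, 0 ≤ f z) (h : ∀ z, f z ≤ g z) : ‖f‖ ≤ ‖g‖ :=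
  my_norm_le f (norm_nonneg g) fun z => by
    rw [abs_of_nonneg (hf z)]; exact (h z).trans (my_ev_le_norm g z)

/-- superlevel sets are compact -/
theorem my_superlevel_compact (f : C₀(Z, ℝ)) {ε : ℝ} (hε : 0 < ε) :
    IsCompact {z | ε ≤ f z} := by
  have h := zero_at_infty f
  rw [Metric.tendsto_nhds] at h
  have h2 := h ε hε
  rw [Filter.eventually_iff, mem_cocompact] at h2
  obtain ⟨K, hK, hKsub⟩ := h2
  have hcl : IsClosed {z | ε ≤ f z} := isClosed_le continuous_const f.continuous
  refine hK.of_isClosed_subset hcl fun z hz => ?_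
  by_contra hzK
  have h3 := hKsub hzK
  simp only [Set.mem_setOf_eq, dist_zero_right, Real.norm_eq_abs] at h3
  exact absurd (hz.trans (le_abs_self _)) (not_le.2 h3)

/-- a nonzero nonneg C₀ function attains its norm -/
theorem my_exists_norm_eq {f : C₀(Z, ℝ)} (hf : ∀ z, 0 ≤ f z) (hne : f ≠ 0) :
    ∃ z, f z = ‖f‖ := by
  have hpos : 0 < ‖f‖ := by
    rcases eq_or_lt_of_le (norm_nonneg f) with h | h
    · exact absurd (norm_eq_zero.mp h.symm) hne
    · exact h
  have hKc : IsCompact {z | ‖f‖ / 2 ≤ f z} := my_superlevel_compact f (by linarith)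
  have hKne : {z | ‖f‖ / 2 ≤ f z}.Nonempty := by
    by_contra hemp
    push_neg at hemp
    have : ‖f‖ ≤ ‖f‖ / 2 := my_norm_le_of_nonneg f (by linarith) hf fun z => by
      have hz : z ∉ ({z | ‖f‖ / 2 ≤ f z} : Set Z) := by rw [hemp]; exact Set.notMem_empty z
      simp only [Set.mem_setOf_eq, not_le] at hz
      linarith
    linarith
  obtain ⟨z₀, hz₀K, hz₀max⟩ := hKc.exists_isMaxOn hKne (f.continuous.continuousOn)
  refine ⟨z₀, le_antisymm (my_ev_le_norm f z₀) ?_⟩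
  refine my_norm_le_of_nonneg f (hf z₀) hf fun z => ?_
  by_cases hz : z ∈ {z | ‖f‖ / 2 ≤ f z}
  · exact hz₀max hz
  · simp only [Set.mem_setOf_eq, not_le] at hz
    exact hz.le.trans hz₀K

theorem my_exists_pos {f : C₀(Z, ℝ)} (hf : ∀ z, 0 ≤ f z) (hne : f ≠ 0) :
    ∃ z, 0 < f z := by
  obtain ⟨z, hz⟩ := my_exists_norm_eq hf hne
  refine ⟨z, ?_⟩
  rw [hz]
  rcases eq_or_lt_of_le (norm_nonneg f) with h | h
  · exact absurd (norm_eq_zero.mp h.symm) hne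
  · exact h

theorem my_norm_mul_self {u : C₀(Z, ℝ)} (hu : ∀ z, 0 ≤ u z) : ‖u * u‖ = ‖u‖ ^ 2 := by
  by_cases hne : u = 0
  · subst hne; simp
  rcases my_exists_norm_eq hu hne with ⟨z, hz⟩
  apply le_antisymm
  · refine my_norm_le_of_nonneg _ (by positivity) (fun z => mul_nonneg (hu z) (hu z)) fun z => ?_
    simp only [ZeroAtInftyContinuousMap.mul_apply, sq]
    exact mul_le_mul (my_ev_le_norm u z) (my_ev_le_norm u z) (hu z) (norm_nonneg u)
  · calc ‖u‖ ^ 2 = u z * u z := by rw [sq, hz]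
    _ = (u * u) z := rfl
    _ ≤ ‖u * u‖ := my_ev_le_norm _ _

theorem my_norm_smul (f : C₀(Z, ℝ)) {c : ℝ} (hc : 0 ≤ c) : ‖c • f‖ = c * ‖f‖ := by
  rw [norm_smul c f, Real.norm_eq_abs, abs_of_nonneg hc]

theorem my_smul_apply (f : C₀(Z, ℝ)) (c : ℝ) (z : Z) : (c • f) z = c * f z := rfl

/-- pointwise min of two C₀ functions -/
noncomputable def cmin (f g : C₀(Z, ℝ)) : C₀(Z, ℝ) :=
  ⟨⟨fun z => min (f z) (g z), f.continuous.min g.continuous⟩, by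
    have : Tendsto (fun z => min (f z) (g z)) (cocompact Z) (nhds (min 0 0)) :=
      (zero_at_infty f).min (zero_at_infty g)
    simpa using this⟩

@[simp] theorem cmin_apply (f g : C₀(Z, ℝ)) (z : Z) : cmin f g z = min (f z) (g z) := rfl

/-- pointwise min with a positive constant -/
noncomputable def cminC (f : C₀(Z, ℝ)) (ε : ℝ) (hε : 0 ≤ ε) : C₀(Z, ℝ) :=
  ⟨⟨fun z => min (f z) ε, f.continuous.min continuous_const⟩, by
    have : Tendsto (fun z => min (f z) ε) (cocompact Z) (nhds (min 0 ε)) :=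
      (zero_at_infty f).min tendsto_const_nhds
    simpa [min_eq_left hε] using this⟩

@[simp] theorem cminC_apply (f : C₀(Z, ℝ)) (ε : ℝ) (hε : 0 ≤ ε) (z : Z) :
    cminC f ε hε z = min (f z) ε := rfl

/-- bump functions in C₀: 1 on a compact set, 0 outside an open set -/
theorem my_bump [LocallyCompactSpace Z] [T2Space Z] {K U : Set Z} (hK : IsCompact K)
    (hU : IsOpen U) (hKU : K ⊆ U) :
    ∃ φ : C₀(Z, ℝ), (∀ z, 0 ≤ φ z) ∧ (∀ z, φ z ≤ 1) ∧ (∀ z ∈ K, φ z = 1) ∧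
      (∀ z ∉ U, φ z = 0) := by
  obtain ⟨ψ, h1, h0, hsupp, hicc⟩ := exists_continuous_one_zero_of_isCompact hK
    hU.isClosed_compl (by simpa [Set.disjoint_compl_right_iff_subset] using hKU)
  refine ⟨⟨ψ, ?_⟩, fun z => (hicc z).1, fun z => (hicc z).2, fun z hz => h1 hz,
    fun z hz => h0 hz⟩
  exact hsupp.is_zero_at_infty

theorem my_bump_pt [LocallyCompactSpace Z] [T2Space Z] {z₀ : Z} {U : Set Z}
    (hU : IsOpen U) (hz₀ : z₀ ∈ U) :
    ∃ φ : C₀(Z, ℝ), (∀ z, 0 ≤ φ z) ∧ (∀ z, φ z ≤ 1) ∧ φ z₀ = 1 ∧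
      (∀ z ∉ U, φ z = 0) ∧ ‖φ‖ = 1 := by
  obtain ⟨φ, h0, h1, hK, hout⟩ := my_bump (isCompact_singleton (x := z₀)) hU
    (Set.singleton_subset_iff.2 hz₀)
  have hφz₀ : φ z₀ = 1 := hK z₀ rfl
  exact ⟨φ, h0, h1, hφz₀, hout, le_antisymm (my_norm_le_of_nonneg φ one_pos.le h0 h1)
    (hφz₀ ▸ my_ev_le_norm φ z₀)⟩

/-- from a directed family of compacts contained in an open set, one member is inside -/
theorem my_directed_subset {ι : Type*} [Nonempty ι] (t : ι → Set Z)
    (hd : Directed (· ⊇ ·) t) (hn : ∀ i, (t i).Nonempty) (hc : ∀ i, IsCompact (t i))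
    (hcl : ∀ i, IsClosed (t i)) {U : Set Z} (hU : IsOpen U) (hsub : ⋂ i, t i ⊆ U) :
    ∃ i, t i ⊆ U := by
  by_contra hno
  push_neg at hno
  have hd2 : Directed (· ⊇ ·) (fun i => t i ∩ Uᶜ) := fun i j => by
    obtain ⟨k, hki, hkj⟩ := hd i j
    exact ⟨k, Set.inter_subset_inter_left _ hki, Set.inter_subset_inter_left _ hkj⟩
  have hne : (⋂ i, t i ∩ Uᶜ).Nonempty := by
    refine IsCompact.nonempty_iInter_of_directed_nonempty_isCompact_isClosed _ hd2
      (fun i => ?_) (fun i => (hc i).inter_right hU.isClosed_compl)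
      (fun i => (hcl i).inter hU.isClosed_compl)
    obtain ⟨z, hz⟩ := Set.not_subset.1 (hno i)
    exact ⟨z, hz.1, hz.2⟩
  obtain ⟨z, hz⟩ := hne
  simp only [Set.mem_iInter, Set.mem_inter_iff] at hz
  exact (hz (Classical.arbitrary _)).2 (hsub (Set.mem_iInter.2 fun i => (hz i).1))

end Helpers


section Main

variable {X Y : Type*}
    [TopologicalSpace X] [LocallyCompactSpace X] [T2Space X]
    [TopologicalSpace Y] [LocallyCompactSpace Y] [T2Space Y]
    {T : C₀(X, ℝ) → C₀(Y, ℝ)}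
    (hbij : Set.BijOn T {f : C₀(X, ℝ) | ∀ x, 0 ≤ f x} {g : C₀(Y, ℝ) | ∀ y, 0 ≤ g y})
    (hadd : ∀ f g : C₀(X, ℝ), (∀ x, 0 ≤ f x) → (∀ x, 0 ≤ g x) →
      ‖T (f + g)‖ = ‖T f + T g‖)
    (hmul : ∀ f g : C₀(X, ℝ), (∀ x, 0 ≤ f x) → (∀ x, 0 ≤ g x) →
      ‖T (f * g)‖ = ‖T f * T g‖)

section Lam

include hbij in
theorem L_Tmem {f : C₀(X, ℝ)} (hf : ∀ x, 0 ≤ f x) : ∀ y, 0 ≤ T f y :=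
  hbij.mapsTo hf

include hbij in
theorem L_injOn {f g : C₀(X, ℝ)} (hf : ∀ x, 0 ≤ f x) (hg : ∀ x, 0 ≤ g x)
    (h : T f = T g) : f = g :=
  hbij.injOn hf hg h

include hbij hadd in
theorem L_T0 : T 0 = 0 := by
  have h0 : ∀ x : X, 0 ≤ (0 : C₀(X, ℝ)) x := fun x => le_refl _
  have h := hadd 0 0 h0 h0
  simp only [add_zero] at h
  have h2 : T 0 + T 0 = (2:ℝ) • T 0 := (two_smul ℝ (T 0)).symm
  rw [h2, my_norm_smul _ (by norm_num : (0:ℝ) ≤ 2)] at h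
  have : ‖T 0‖ = 0 := by linarith
  exact norm_eq_zero.mp this

include hbij hadd in
theorem L_ne0 {f : C₀(X, ℝ)} (hf : ∀ x, 0 ≤ f x) (hne : f ≠ 0) : T f ≠ 0 := by
  intro h
  exact hne (L_injOn hbij hf (fun x => le_refl _) (h.trans (L_T0 hbij hadd).symm))

include hbij hadd in
theorem L_norm_pos {f : C₀(X, ℝ)} (hf : ∀ x, 0 ≤ f x) (hne : f ≠ 0) : 0 < ‖T f‖ := by
  rcases eq_or_lt_of_le (norm_nonneg (T f)) with h | h
  · exact absurd (norm_eq_zero.mp h.symm) (L_ne0 hbij hadd hf hne)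
  · exact h

include hbij hadd in
/-- monotonicity of the norm functional -/
theorem L_mono {f g : C₀(X, ℝ)} (hf : ∀ x, 0 ≤ f x) (hg : ∀ x, 0 ≤ g x)
    (hle : ∀ x, f x ≤ g x) : ‖T f‖ ≤ ‖T g‖ := by
  have hgf : ∀ x, 0 ≤ (g - f) x := fun x => by
    simp only [ZeroAtInftyContinuousMap.sub_apply]; linarith [hle x]
  have hfg : f + (g - f) = g := by ext x; simp
  have h := hadd f (g - f) hf hgf
  rw [hfg] at h
  rw [h]
  refine my_norm_mono (L_Tmem hbij hf) fun y => ?_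
  simp only [ZeroAtInftyContinuousMap.add_apply]
  linarith [L_Tmem hbij hgf y]

include hadd in
theorem L_subadd {f g : C₀(X, ℝ)} (hf : ∀ x, 0 ≤ f x) (hg : ∀ x, 0 ≤ g x) :
    ‖T (f + g)‖ ≤ ‖T f‖ + ‖T g‖ :=
  (hadd f g hf hg).le.trans (norm_add_le _ _)

include hbij hmul in
theorem L_sq {f : C₀(X, ℝ)} (hf : ∀ x, 0 ≤ f x) : ‖T (f * f)‖ = ‖T f‖ ^ 2 := by
  rw [hmul f f hf hf, my_norm_mul_self (L_Tmem hbij hf)]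

include hbij hadd in
theorem L_smul_nat (f : C₀(X, ℝ)) (hf : ∀ x, 0 ≤ f x) (n : ℕ) :
    ‖T ((n : ℝ) • f)‖ = n * ‖T f‖ := by
  have hsm : ∀ c : ℝ, 0 ≤ c → ∀ x, 0 ≤ (c • f) x := fun c hc x =>
    mul_nonneg hc (hf x)
  have hdouble : ∀ m : ℕ, ‖T (((2 * m : ℕ) : ℝ) • f)‖ = 2 * ‖T (((m : ℕ) : ℝ) • f)‖ := by
    intro m
    have heq : (((2 * m : ℕ) : ℝ)) • f = (m : ℝ) • f + (m : ℝ) • f := by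
      ext x; simp [my_smul_apply]; ring
    rw [heq, hadd _ _ (hsm m (by positivity)) (hsm m (by positivity))]
    have h2 : T ((m:ℝ) • f) + T ((m:ℝ) • f) = (2:ℝ) • T ((m:ℝ) • f) :=
      (two_smul ℝ _).symm
    rw [h2, my_norm_smul _ (by norm_num : (0:ℝ) ≤ 2)]
  have hsub : ∀ m : ℕ, ‖T (((m+1 : ℕ) : ℝ) • f)‖ ≤ ‖T ((m : ℝ) • f)‖ + ‖T f‖ := by
    intro m
    have heq : (((m + 1 : ℕ) : ℝ)) • f = (m : ℝ) • f + f := by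
      ext x; simp [my_smul_apply]; ring
    rw [heq]
    calc ‖T ((m : ℝ) • f + f)‖ = ‖T ((m:ℝ) • f) + T f‖ :=
          hadd _ _ (hsm m (by positivity)) hf
    _ ≤ _ := norm_add_le _ _
  induction n using Nat.strong_induction_on with
  | _ n ih =>
    match n with
    | 0 => simp [L_T0 hbij hadd]
    | 1 => simp
    | (n + 2) =>
      rcases Nat.even_or_odd (n + 2) with ⟨m, hm⟩ | ⟨m, hm⟩
      · -- even : n + 2 = 2 * m
        have hm' : n + 2 = 2 * m := by omega
        have hmlt : m < n + 2 := by omega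
        rw [hm', hdouble m, ih m hmlt]
        push_cast [hm']
        ring
      · -- odd : n + 2 = 2 * m + 1,  m ≥ 1
        have hm1 : 1 ≤ m := by omega
        have hup : ‖T (((n+2 : ℕ) : ℝ) • f)‖ ≤ (n+2 : ℕ) * ‖T f‖ := by
          have h1 : (n + 2 : ℕ) = (2*m) + 1 := by omega
          have h2m : ‖T (((2*m : ℕ) : ℝ) • f)‖ = (2*m : ℕ) * ‖T f‖ := by
            rw [hdouble m, ih m (by omega)]
            push_cast; ring
          calc ‖T (((n+2 : ℕ) : ℝ) • f)‖ = ‖T ((((2*m) + 1 : ℕ) : ℝ) • f)‖ := by rw [h1]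
            _ ≤ ‖T (((2*m : ℕ) : ℝ) • f)‖ + ‖T f‖ := hsub (2*m)
            _ = (2*m : ℕ) * ‖T f‖ + ‖T f‖ := by rw [h2m]
            _ = (n+2 : ℕ) * ‖T f‖ := by rw [h1]; push_cast; ring
        have hdn : ‖T (((n+3 : ℕ) : ℝ) • f)‖ = (n+3 : ℕ) * ‖T f‖ := by
          have h1 : (n + 3 : ℕ) = 2 * (m+1) := by omega
          rw [h1, hdouble (m+1), ih (m+1) (by omega)]
          push_cast; ring
        have hlow : (n+3 : ℕ) * ‖T f‖ ≤ ‖T (((n+2 : ℕ) : ℝ) • f)‖ + ‖T f‖ := by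
          rw [← hdn]
          have := hsub (n + 2)
          have h32 : ((n + 2) + 1 : ℕ) = (n + 3 : ℕ) := by omega
          rw [h32] at this
          exact this
        have : (n+2 : ℕ) * ‖T f‖ ≤ ‖T (((n+2 : ℕ) : ℝ) • f)‖ := by
          push_cast at hlow ⊢
          linarith
        linarith [hup, this]

include hbij hadd in
theorem L_smul (f : C₀(X, ℝ)) (hf : ∀ x, 0 ≤ f x) {c : ℝ} (hc : 0 ≤ c) :
    ‖T (c • f)‖ = c * ‖T f‖ := by
  have hsm : ∀ d : ℝ, 0 ≤ d → ∀ x, 0 ≤ (d • f) x := fun d hd x =>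
    mul_nonneg hd (hf x)
  -- rational scalars
  have hrat : ∀ q : ℚ, 0 ≤ q → ‖T ((q : ℝ) • f)‖ = (q:ℝ) * ‖T f‖ := by
    intro q hq
    have hd : 0 < (q.den : ℝ) := by positivity
    have hnum : 0 ≤ q.num := Rat.num_nonneg.mpr hq
    have hcast : ((q.num.toNat : ℕ) : ℝ) = (q.num : ℝ) := by
      exact_mod_cast congrArg (Int.cast : ℤ → ℝ) (Int.toNat_of_nonneg hnum)
    have key : ((q.den : ℕ) : ℝ) • ((q:ℝ) • f) = ((q.num.toNat : ℕ) : ℝ) • f := by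
      ext x
      simp only [my_smul_apply]
      have h5 : ((q.den : ℝ)) * (q:ℝ) = (q.num : ℝ) := by
        rw [mul_comm]
        exact_mod_cast Rat.mul_den_eq_num q
      rw [← mul_assoc, h5, hcast]
    have h1 := L_smul_nat hbij hadd ((q:ℝ) • f) (hsm _ (by positivity)) q.den
    rw [key, L_smul_nat hbij hadd f hf _] at h1
    have h6 : (q.num.toNat : ℝ) = (q.den : ℝ) * (q : ℝ) := by
      rw [hcast, mul_comm]
      exact_mod_cast (Rat.mul_den_eq_num q).symm
    rw [h6] at h1
    have h7 : (q.den : ℝ) * ‖T ((q:ℝ) • f)‖ = (q.den:ℝ) * ((q:ℝ) * ‖T f‖) := by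
      rw [← h1]; ring
    exact mul_left_cancel₀ (ne_of_gt hd) h7
  -- squeeze
  by_cases hTf : ‖T f‖ = 0
  · -- then T f = 0, f = 0
    have hf0 : f = 0 := L_injOn hbij hf (fun _ => le_refl _)
      ((norm_eq_zero.mp hTf).trans (L_T0 hbij hadd).symm)
    subst hf0
    simp only [smul_zero]
    rw [L_T0 hbij hadd]
    simp
  have hTfpos : 0 < ‖T f‖ := lt_of_le_of_ne (norm_nonneg _) (Ne.symm hTf)
  refine le_antisymm ?_ ?_
  · -- upper bound
    refine le_of_forall_pos_le_add fun ε hε => ?_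
    obtain ⟨q, hq1, hq2⟩ := exists_rat_btwn (lt_add_of_pos_right c (div_pos hε hTfpos))
    have hq0 : (0:ℝ) ≤ (q:ℝ) := le_of_lt (lt_of_le_of_lt hc hq1)
    have hmono := L_mono hbij hadd (hsm c hc) (hsm _ hq0)
      (fun x => by simp only [my_smul_apply]; exact mul_le_mul_of_nonneg_right hq1.le (hf x))
    rw [hrat q (by exact_mod_cast hq0)] at hmono
    calc ‖T (c • f)‖ ≤ (q:ℝ) * ‖T f‖ := hmono
      _ ≤ (c + ε / ‖T f‖) * ‖T f‖ := mul_le_mul_of_nonneg_right hq2.le (norm_nonneg _)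
      _ = c * ‖T f‖ + ε := by field_simp
  · -- lower bound
    refine le_of_forall_pos_le_add fun ε hε => ?_
    rcases eq_or_lt_of_le hc with hc0 | hcpos
    · rw [← hc0]; simp; positivity
    obtain ⟨q, hq1, hq2⟩ := exists_rat_btwn
      (sub_lt_self c (lt_min (div_pos hε hTfpos) hcpos) : c - min (ε / ‖T f‖) c < c)
    have hq0 : (0:ℝ) ≤ (q:ℝ) := by
      have : c - min (ε / ‖T f‖) c ≥ 0 := by
        have := min_le_right (ε / ‖T f‖) c
        linarith
      linarith
    have hmono := L_mono hbij hadd (hsm _ hq0) (hsm c hc)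
      (fun x => by simp only [my_smul_apply]; exact mul_le_mul_of_nonneg_right hq2.le (hf x))
    rw [hrat q (by exact_mod_cast hq0)] at hmono
    have hmin : c - ε / ‖T f‖ ≤ (q:ℝ) := by
      have := min_le_left (ε / ‖T f‖) c
      linarith
    calc c * ‖T f‖ ≤ ((q:ℝ) + ε / ‖T f‖) * ‖T f‖ := by
          rw [add_mul]
          have : (c - ε / ‖T f‖) * ‖T f‖ ≤ (q:ℝ) * ‖T f‖ :=
            mul_le_mul_of_nonneg_right hmin (norm_nonneg _)
          rw [sub_mul] at this
          have hdiv : ε / ‖T f‖ * ‖T f‖ = ε := by field_simp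
          linarith [hdiv]
        _ = (q:ℝ) * ‖T f‖ + ε := by field_simp
        _ ≤ ‖T (c • f)‖ + ε := by linarith [hmono]

end Lam

section Inverse

/-- a choice of inverse for `T` on the positive cone -/
noncomputable def Sinv (hbij : Set.BijOn T {f : C₀(X, ℝ) | ∀ x, 0 ≤ f x}
    {g : C₀(Y, ℝ) | ∀ y, 0 ≤ g y}) (u : C₀(Y, ℝ)) : C₀(X, ℝ) :=
  open scoped Classical in
  if h : ∀ y, (0:ℝ) ≤ u y then (hbij.surjOn h).choose else 0

theorem Sinv_spec {u : C₀(Y, ℝ)} (hu : ∀ y, 0 ≤ u y) :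
    (∀ x, 0 ≤ Sinv hbij u x) ∧ T (Sinv hbij u) = u := by
  classical
  rw [Sinv]
  rw [dif_pos hu]
  have h1 := (hbij.surjOn hu).choose_spec
  exact ⟨h1.1, h1.2⟩

theorem Sinv_mem {u : C₀(Y, ℝ)} (hu : ∀ y, 0 ≤ u y) : ∀ x, 0 ≤ Sinv hbij u x :=
  (Sinv_spec hbij hu).1

theorem T_Sinv {u : C₀(Y, ℝ)} (hu : ∀ y, 0 ≤ u y) : T (Sinv hbij u) = u :=
  (Sinv_spec hbij hu).2

theorem Sinv_T {f : C₀(X, ℝ)} (hf : ∀ x, 0 ≤ f x) : Sinv hbij (T f) = f := by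
  have hTf : ∀ y, 0 ≤ T f y := hbij.mapsTo hf
  exact hbij.injOn (Sinv_mem hbij hTf) hf (T_Sinv hbij hTf)

end Inverse

section OrderIso

include hbij hadd hmul in
/-- the norm functional is dominated by the norm -/
theorem L_le_norm {f : C₀(X, ℝ)} (hf : ∀ x, 0 ≤ f x) : ‖T f‖ ≤ ‖f‖ := by
  by_cases hne : f = 0
  · subst hne; rw [L_T0 hbij hadd]; simp
  have hsq := L_sq hbij hmul hf
  have hmono : ‖T (f * f)‖ ≤ ‖T (‖f‖ • f)‖ := by
    refine L_mono hbij hadd (fun x => mul_nonneg (hf x) (hf x))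
      (fun x => mul_nonneg (norm_nonneg f) (hf x)) fun x => ?_
    show f x * f x ≤ ‖f‖ * f x
    exact mul_le_mul_of_nonneg_right (my_ev_le_norm f x) (hf x)
  rw [L_smul hbij hadd f hf (norm_nonneg f)] at hmono
  rw [hsq] at hmono
  have hpos := L_norm_pos hbij hadd hf hne
  nlinarith [hmono, hpos]

include hbij hadd hmul in
theorem L_norm_Sinv {u : C₀(Y, ℝ)} (hu : ∀ y, 0 ≤ u y) : ‖u‖ ≤ ‖Sinv hbij u‖ := by
  have := L_le_norm hbij hadd hmul (Sinv_mem hbij hu)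
  rwa [T_Sinv hbij hu] at this

/-- extraction lemma for sums -/
theorem EXT_add {u v : C₀(Y, ℝ)} (hu : ∀ y, 0 ≤ u y) (hv : ∀ y, 0 ≤ v y)
    (h : ∀ w : C₀(Y, ℝ), (∀ y, 0 ≤ w y) → ‖u + w‖ ≤ ‖v + w‖) : ∀ y, u y ≤ v y := by
  intro y
  refine le_of_forall_pos_le_add fun ε hε => ?_
  set V : Set Y := {z | v z < v y + ε} with hV
  have hVopen : IsOpen V := isOpen_lt v.continuous continuous_const
  have hyV : y ∈ V := by simp [hV]; linarith
  obtain ⟨φ, hφ0, hφ1, hφy, hφout, hφnorm⟩ := my_bump_pt hVopen hyV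
  set R : ℝ := ‖v‖ + 1 with hR
  have hRpos : 0 < R := by positivity
  have hw : ∀ z, 0 ≤ (R • φ) z := fun z => mul_nonneg hRpos.le (hφ0 z)
  have hup : ‖v + R • φ‖ ≤ v y + ε + R := by
    refine my_norm_le_of_nonneg _ (by linarith [hv y]) (fun z => by
      simp only [ZeroAtInftyContinuousMap.add_apply]
      exact add_nonneg (hv z) (hw z)) fun z => ?_
    simp only [ZeroAtInftyContinuousMap.add_apply, my_smul_apply]
    by_cases hz : z ∈ V
    · have h1 : v z ≤ v y + ε := le_of_lt hz
      have h2 : R * φ z ≤ R := by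
        nlinarith [hφ1 z, hφ0 z]
      linarith
    · rw [hφout z hz]
      have := my_ev_le_norm v z
      simp only [mul_zero, add_zero]
      linarith [hv y]
  have hlow : u y + R ≤ ‖u + R • φ‖ := by
    have : u y + R = (u + R • φ) y := by
      simp only [ZeroAtInftyContinuousMap.add_apply, my_smul_apply, hφy, mul_one]
    rw [this]
    exact my_ev_le_norm _ _
  have := (hlow.trans (h _ hw)).trans hup
  linarith

/-- extraction lemma for products -/
theorem EXT_mul {u v : C₀(Y, ℝ)} (hu : ∀ y, 0 ≤ u y) (hv : ∀ y, 0 ≤ v y)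
    (h : ∀ w : C₀(Y, ℝ), (∀ y, 0 ≤ w y) → ‖u * w‖ ≤ ‖v * w‖) : ∀ y, u y ≤ v y := by
  intro y
  refine le_of_forall_pos_le_add fun ε hε => ?_
  set V : Set Y := {z | v z < v y + ε} with hV
  have hVopen : IsOpen V := isOpen_lt v.continuous continuous_const
  have hyV : y ∈ V := by simp [hV]; linarith
  obtain ⟨φ, hφ0, hφ1, hφy, hφout, hφnorm⟩ := my_bump_pt hVopen hyV
  have hup : ‖v * φ‖ ≤ v y + ε := by
    refine my_norm_le_of_nonneg _ (by linarith [hv y]) (fun z => by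
      simp only [ZeroAtInftyContinuousMap.mul_apply]
      exact mul_nonneg (hv z) (hφ0 z)) fun z => ?_
    simp only [ZeroAtInftyContinuousMap.mul_apply]
    by_cases hz : z ∈ V
    · have h1 : v z ≤ v y + ε := le_of_lt hz
      nlinarith [hφ1 z, hφ0 z, hv z]
    · rw [hφout z hz, mul_zero]
      linarith [hv y]
  have hlow : u y ≤ ‖u * φ‖ := by
    have h1 : u y = (u * φ) y := by
      simp only [ZeroAtInftyContinuousMap.mul_apply, hφy, mul_one]
    rw [h1]
    exact my_ev_le_norm _ _
  exact (hlow.trans (h _ hφ0)).trans hup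

include hbij hadd hmul in
/-- pointwise homogeneity of T -/
theorem PH {f : C₀(X, ℝ)} (hf : ∀ x, 0 ≤ f x) {c : ℝ} (hc : 0 ≤ c) :
    T (c • f) = c • T f := by
  have hcf : ∀ x, 0 ≤ (c • f) x := fun x => mul_nonneg hc (hf x)
  have hTcf := hbij.mapsTo hcf
  have hcTf : ∀ y, 0 ≤ (c • T f) y := fun y => mul_nonneg hc (hbij.mapsTo hf y)
  have key : ∀ w : C₀(Y, ℝ), (∀ y, 0 ≤ w y) → ‖T (c • f) * w‖ = ‖(c • T f) * w‖ := by
    intro w hw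
    set g := Sinv hbij w with hg
    have hgmem := Sinv_mem hbij hw
    have hgT : T g = w := T_Sinv hbij hw
    have h1 : (c • f) * g = c • (f * g) := by
      ext x
      simp only [ZeroAtInftyContinuousMap.mul_apply, my_smul_apply]
      ring
    have h2 : (c • T f) * w = c • (T f * w) := by
      ext y
      simp only [ZeroAtInftyContinuousMap.mul_apply, my_smul_apply]
      ring
    calc ‖T (c • f) * w‖ = ‖T (c • f) * T g‖ := by rw [hgT]
      _ = ‖T ((c • f) * g)‖ := (hmul _ _ hcf hgmem).symm
      _ = ‖T (c • (f * g))‖ := by rw [h1]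
      _ = c * ‖T (f * g)‖ := L_smul hbij hadd _ (fun x => mul_nonneg (hf x) (hgmem x)) hc
      _ = c * ‖T f * T g‖ := by rw [hmul _ _ hf hgmem]
      _ = c * ‖T f * w‖ := by rw [hgT]
      _ = ‖c • (T f * w)‖ := (my_norm_smul _ hc).symm
      _ = ‖(c • T f) * w‖ := by rw [h2]
  have hle1 := EXT_mul hTcf hcTf (fun w hw => (key w hw).le)
  have hle2 := EXT_mul hcTf hTcf (fun w hw => (key w hw).ge)
  ext y
  exact le_antisymm (hle1 y) (hle2 y)

include hbij hadd in
/-- T is monotone -/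
theorem MONO {f g : C₀(X, ℝ)} (hf : ∀ x, 0 ≤ f x) (hg : ∀ x, 0 ≤ g x)
    (hle : ∀ x, f x ≤ g x) : ∀ y, T f y ≤ T g y := by
  refine EXT_add (hbij.mapsTo hf) (hbij.mapsTo hg) fun w hw => ?_
  set h := Sinv hbij w with hh
  have hhmem := Sinv_mem hbij hw
  have hhT : T h = w := T_Sinv hbij hw
  calc ‖T f + w‖ = ‖T f + T h‖ := by rw [hhT]
    _ = ‖T (f + h)‖ := (hadd _ _ hf hhmem).symm
    _ ≤ ‖T (g + h)‖ := by
        refine L_mono hbij hadd (fun x => add_nonneg (hf x) (hhmem x))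
          (fun x => add_nonneg (hg x) (hhmem x)) fun x => ?_
        simp only [ZeroAtInftyContinuousMap.add_apply]
        linarith [hle x]
    _ = ‖T g + T h‖ := hadd _ _ hg hhmem
    _ = ‖T g + w‖ := by rw [hhT]

include hbij hadd hmul in
/-- the inverse of T is monotone -/
theorem MONOinv {f g : C₀(X, ℝ)} (hf : ∀ x, 0 ≤ f x) (hg : ∀ x, 0 ≤ g x)
    (hle : ∀ y, T f y ≤ T g y) : ∀ x, f x ≤ g x := by
  intro x₀
  refine le_of_forall_pos_le_add fun ε' hε' => ?_
  set ε : ℝ := ε' / 2 with hεdef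
  have hε : 0 < ε := by positivity
  rcases le_or_gt (f x₀) ε with h | h
  · linarith [hg x₀]
  set U : Set X := {x | f x₀ - ε < f x ∧ g x < g x₀ + ε} with hU
  have hUopen : IsOpen U :=
    (isOpen_lt continuous_const f.continuous).inter (isOpen_lt g.continuous continuous_const)
  have hx₀U : x₀ ∈ U := by
    simp only [hU, Set.mem_setOf_eq]
    constructor <;> linarith
  obtain ⟨φ, hφ0, hφ1, hφx₀, hφout, hφnorm⟩ := my_bump_pt hUopen hx₀U
  have hφne : φ ≠ 0 := by
    intro h0
    have h00 : φ x₀ = 0 := by rw [h0]; rfl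
    rw [hφx₀] at h00; norm_num at h00
  have hlamphi : 0 < ‖T φ‖ := L_norm_pos hbij hadd hφ0 hφne
  have hfε : (0:ℝ) ≤ f x₀ - ε := by linarith
  have h1 : ‖T ((f x₀ - ε) • φ)‖ ≤ ‖T (f * φ)‖ := by
    refine L_mono hbij hadd (fun x => mul_nonneg hfε (hφ0 x))
      (fun x => mul_nonneg (hf x) (hφ0 x)) fun x => ?_
    simp only [ZeroAtInftyContinuousMap.mul_apply, my_smul_apply]
    by_cases hx : x ∈ U
    · exact mul_le_mul_of_nonneg_right hx.1.le (hφ0 x)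
    · rw [hφout x hx]; simp
  have h2 : ‖T (f * φ)‖ ≤ ‖T (g * φ)‖ := by
    rw [hmul _ _ hf hφ0, hmul _ _ hg hφ0]
    refine my_norm_mono (fun y => mul_nonneg (hbij.mapsTo hf y) (hbij.mapsTo hφ0 y))
      fun y => ?_
    simp only [ZeroAtInftyContinuousMap.mul_apply]
    exact mul_le_mul_of_nonneg_right (hle y) (hbij.mapsTo hφ0 y)
  have h3 : ‖T (g * φ)‖ ≤ ‖T ((g x₀ + ε) • φ)‖ := by
    refine L_mono hbij hadd (fun x => mul_nonneg (hg x) (hφ0 x))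
      (fun x => mul_nonneg (by linarith [hg x₀]) (hφ0 x)) fun x => ?_
    simp only [ZeroAtInftyContinuousMap.mul_apply, my_smul_apply]
    by_cases hx : x ∈ U
    · exact mul_le_mul_of_nonneg_right hx.2.le (hφ0 x)
    · rw [hφout x hx]; simp
  rw [L_smul hbij hadd φ hφ0 hfε] at h1
  rw [L_smul hbij hadd φ hφ0 (by linarith [hg x₀])] at h3
  have := (h1.trans h2).trans h3
  have h4 : f x₀ - ε ≤ g x₀ + ε := le_of_mul_le_mul_right (by linarith) hlamphi
  linarith

include hbij hadd hmul in
/-- T preserves pointwise minima -/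
theorem LATmin {f g : C₀(X, ℝ)} (hf : ∀ x, 0 ≤ f x) (hg : ∀ x, 0 ≤ g x) :
    T (cmin f g) = cmin (T f) (T g) := by
  have hmin : ∀ x, 0 ≤ cmin f g x := fun x => le_min (hf x) (hg x)
  have hminY : ∀ y, 0 ≤ cmin (T f) (T g) y := fun y =>
    le_min (hbij.mapsTo hf y) (hbij.mapsTo hg y)
  set k := Sinv hbij (cmin (T f) (T g)) with hk
  have hkmem := Sinv_mem hbij hminY
  have hkT : T k = cmin (T f) (T g) := T_Sinv hbij hminY
  have hkf : ∀ x, k x ≤ f x := by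
    refine MONOinv hbij hadd hmul hkmem hf fun y => ?_
    rw [hkT]
    exact min_le_left _ _
  have hkg : ∀ x, k x ≤ g x := by
    refine MONOinv hbij hadd hmul hkmem hg fun y => ?_
    rw [hkT]
    exact min_le_right _ _
  ext y
  refine le_antisymm ?_ ?_
  · simp only [cmin_apply]
    exact le_min (MONO hbij hadd hmin hf (fun x => min_le_left _ _) y)
      (MONO hbij hadd hmin hg (fun x => min_le_right _ _) y)
  · calc cmin (T f) (T g) y = T k y := by rw [hkT]
      _ ≤ T (cmin f g) y := MONO hbij hadd hkmem hmin
          (fun x => le_min (hkf x) (hkg x)) y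

end OrderIso

section Kset

/-- index type of peak functions at `y` -/
def PyIdx (y : Y) : Type _ :=
  {ψ : C₀(Y, ℝ) // (∀ y', 0 ≤ ψ y') ∧ ψ y = 1 ∧ ‖ψ‖ = 1}

instance PyIdx_nonempty [LocallyCompactSpace Y] [T2Space Y] (y : Y) :
    Nonempty (PyIdx y) := by
  obtain ⟨φ, h0, h1, hy, hout, hnorm⟩ := my_bump_pt (isOpen_univ : IsOpen (Set.univ : Set Y)) (Set.mem_univ y)
  exact ⟨⟨φ, h0, hy, hnorm⟩⟩

include hbij hadd hmul in
theorem Sinv_cmin {u v : C₀(Y, ℝ)} (hu : ∀ y, 0 ≤ u y) (hv : ∀ y, 0 ≤ v y) :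
    Sinv hbij (cmin u v) = cmin (Sinv hbij u) (Sinv hbij v) := by
  have h1 : T (cmin (Sinv hbij u) (Sinv hbij v)) = cmin u v := by
    rw [LATmin hbij hadd hmul (Sinv_mem hbij hu) (Sinv_mem hbij hv),
      T_Sinv hbij hu, T_Sinv hbij hv]
  have h2 : ∀ x, 0 ≤ cmin (Sinv hbij u) (Sinv hbij v) x := fun x =>
    le_min (Sinv_mem hbij hu x) (Sinv_mem hbij hv x)
  calc Sinv hbij (cmin u v) = Sinv hbij (T (cmin (Sinv hbij u) (Sinv hbij v))) := by rw [h1]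
    _ = cmin (Sinv hbij u) (Sinv hbij v) := Sinv_T hbij h2

theorem Py_cmin {y : Y} (ψ₁ ψ₂ : PyIdx (Y := Y) y) :
    (∀ y', 0 ≤ cmin ψ₁.1 ψ₂.1 y') ∧ cmin ψ₁.1 ψ₂.1 y = 1 ∧ ‖cmin ψ₁.1 ψ₂.1‖ = 1 := by
  obtain ⟨h10, h1y, h1n⟩ := ψ₁.2
  obtain ⟨h20, h2y, h2n⟩ := ψ₂.2
  have hnn : ∀ y', 0 ≤ cmin ψ₁.1 ψ₂.1 y' := fun y' => le_min (h10 y') (h20 y')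
  have hval : cmin ψ₁.1 ψ₂.1 y = 1 := by
    simp only [cmin_apply, h1y, h2y, min_self]
  refine ⟨hnn, hval, le_antisymm ?_ ((le_of_eq hval.symm).trans (my_ev_le_norm _ y))⟩
  refine my_norm_le_of_nonneg _ one_pos.le hnn fun y' => ?_
  simp only [cmin_apply]
  exact (min_le_left _ _).trans ((my_ev_le_norm ψ₁.1 y').trans h1n.le)

variable [LocallyCompactSpace Y] [T2Space Y] [LocallyCompactSpace X] [T2Space X]

/-- The compact set associated to a point y -/
def KK (hbij : Set.BijOn T {f : C₀(X, ℝ) | ∀ x, 0 ≤ f x} {g : C₀(Y, ℝ) | ∀ y, 0 ≤ g y})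
    (y : Y) : Set X :=
  ⋂ ψ : PyIdx (Y := Y) y, {x | 1 ≤ Sinv hbij ψ.1 x}

include hbij hadd hmul

theorem Sinv_norm_ge_one {y : Y} (ψ : PyIdx (Y := Y) y) : 1 ≤ ‖Sinv hbij ψ.1‖ := by
  have := L_norm_Sinv hbij hadd hmul ψ.2.1
  rw [ψ.2.2.2] at this
  exact this

theorem Sinv_ne_zero {y : Y} (ψ : PyIdx (Y := Y) y) : Sinv hbij ψ.1 ≠ 0 := by
  intro h
  have := Sinv_norm_ge_one hbij hadd hmul ψ
  rw [h] at this
  simp at this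
  linarith

/-- the superlevel sets of the Sinv of peak functions, at level δ ≤ 1 -/
theorem Sinv_superlevel_nonempty {y : Y} (ψ : PyIdx (Y := Y) y) {δ : ℝ} (hδ : δ ≤ 1) :
    {x | δ ≤ Sinv hbij ψ.1 x}.Nonempty := by
  obtain ⟨x, hx⟩ := my_exists_norm_eq (Sinv_mem hbij ψ.2.1) (Sinv_ne_zero hbij hadd hmul ψ)
  exact ⟨x, by simp only [Set.mem_setOf_eq, hx]; exact hδ.trans (Sinv_norm_ge_one hbij hadd hmul ψ)⟩

theorem KK_nonempty_compact (y : Y) :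
    (KK hbij y).Nonempty ∧ IsCompact (KK hbij y) := by
  have hcl : ∀ ψ : PyIdx (Y := Y) y, IsClosed {x | 1 ≤ Sinv hbij ψ.1 x} := fun ψ =>
    isClosed_le continuous_const (Sinv hbij ψ.1).continuous
  have hcp : ∀ ψ : PyIdx (Y := Y) y, IsCompact {x | 1 ≤ Sinv hbij ψ.1 x} := fun ψ =>
    my_superlevel_compact _ one_pos
  have hdir : Directed (· ⊇ ·) (fun ψ : PyIdx (Y := Y) y => {x | 1 ≤ Sinv hbij ψ.1 x}) := by
    intro ψ₁ ψ₂
    refine ⟨⟨cmin ψ₁.1 ψ₂.1, Py_cmin ψ₁ ψ₂⟩, ?_, ?_⟩ <;>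
    · intro x hx
      simp only [Set.mem_setOf_eq] at hx ⊢
      rw [Sinv_cmin hbij hadd hmul ψ₁.2.1 ψ₂.2.1] at hx
      simp only [cmin_apply, le_min_iff] at hx
      first
        | exact hx.1
        | exact hx.2
  constructor
  · exact IsCompact.nonempty_iInter_of_directed_nonempty_isCompact_isClosed _ hdir
      (fun ψ => Sinv_superlevel_nonempty hbij hadd hmul ψ le_rfl) hcp hcl
  · exact (hcp (Classical.arbitrary _)).of_isClosed_subset
      (isClosed_iInter hcl) (Set.iInter_subset _ _)

/-- UPPER bound : T ρ y ≤ ρ x for x in K_y -/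
theorem UPPER {ρ : C₀(X, ℝ)} (hρ : ∀ x, 0 ≤ ρ x) (y : Y) {x : X} (hx : x ∈ KK hbij y) :
    T ρ y ≤ ρ x := by
  set b := T ρ y with hb
  rcases eq_or_lt_of_le (hbij.mapsTo hρ y) with h0 | hpos
  · rw [hb, ← h0]; exact hρ x
  obtain ⟨ψ₀⟩ := (inferInstance : Nonempty (PyIdx (Y := Y) y))
  have hbinv : (0:ℝ) ≤ b⁻¹ := inv_nonneg.2 hpos.le
  set χ : C₀(Y, ℝ) := cmin ψ₀.1 (b⁻¹ • T ρ) with hχ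
  have hTρmem := hbij.mapsTo hρ
  have hχ0 : ∀ y', 0 ≤ χ y' := fun y' =>
    le_min (ψ₀.2.1 y') (mul_nonneg hbinv (hTρmem y'))
  have hχy : χ y = 1 := by
    simp only [hχ, cmin_apply, my_smul_apply, ψ₀.2.2.1, ← hb]
    rw [inv_mul_cancel₀ (ne_of_gt hpos), min_self]
  have hχnorm : ‖χ‖ = 1 := by
    refine le_antisymm (my_norm_le_of_nonneg _ one_pos.le hχ0 fun y' => ?_)
      ((le_of_eq hχy.symm).trans (my_ev_le_norm _ y))
    simp only [hχ, cmin_apply]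
    exact (min_le_left _ _).trans ((my_ev_le_norm ψ₀.1 y').trans ψ₀.2.2.2.le)
  have hPH : b⁻¹ • T ρ = T (b⁻¹ • ρ) := (PH hbij hadd hmul hρ hbinv).symm
  have hSχ : Sinv hbij χ = cmin (Sinv hbij ψ₀.1) (b⁻¹ • ρ) := by
    rw [hχ, hPH, Sinv_cmin hbij hadd hmul ψ₀.2.1 (hbij.mapsTo (fun x => mul_nonneg hbinv (hρ x))),
      Sinv_T hbij (fun x => mul_nonneg hbinv (hρ x))]
  have hxχ : 1 ≤ Sinv hbij χ x := by
    have := Set.mem_iInter.1 hx ⟨χ, hχ0, hχy, hχnorm⟩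
    exact this
  rw [hSχ] at hxχ
  simp only [cmin_apply, le_min_iff, my_smul_apply] at hxχ
  have := hxχ.2
  calc b = b * 1 := (mul_one b).symm
    _ ≤ b * (b⁻¹ * ρ x) := by nlinarith
    _ = ρ x := by rw [← mul_assoc, mul_inv_cancel₀ (show b ≠ 0 from ne_of_gt hpos), one_mul]

/-- localization of superlevel intersections by any ρ with T ρ y > 0 -/
theorem LOC {ρ : C₀(X, ℝ)} (hρ : ∀ x, 0 ≤ ρ x) {y : Y} (hpos : 0 < T ρ y)
    {δ : ℝ} (hδ : 0 < δ) {x : X}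
    (hx : x ∈ ⋂ ψ : PyIdx (Y := Y) y, {x | δ ≤ Sinv hbij ψ.1 x}) :
    δ * T ρ y ≤ ρ x := by
  set b := T ρ y with hb
  obtain ⟨ψ₀⟩ := (inferInstance : Nonempty (PyIdx (Y := Y) y))
  have hbinv : (0:ℝ) ≤ b⁻¹ := inv_nonneg.2 hpos.le
  set χ : C₀(Y, ℝ) := cmin ψ₀.1 (b⁻¹ • T ρ) with hχ
  have hTρmem := hbij.mapsTo hρ
  have hχ0 : ∀ y', 0 ≤ χ y' := fun y' =>
    le_min (ψ₀.2.1 y') (mul_nonneg hbinv (hTρmem y'))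
  have hχy : χ y = 1 := by
    simp only [hχ, cmin_apply, my_smul_apply, ψ₀.2.2.1, ← hb]
    rw [inv_mul_cancel₀ (ne_of_gt hpos), min_self]
  have hχnorm : ‖χ‖ = 1 := by
    refine le_antisymm (my_norm_le_of_nonneg _ one_pos.le hχ0 fun y' => ?_)
      ((le_of_eq hχy.symm).trans (my_ev_le_norm _ y))
    simp only [hχ, cmin_apply]
    exact (min_le_left _ _).trans ((my_ev_le_norm ψ₀.1 y').trans ψ₀.2.2.2.le)
  have hPH : b⁻¹ • T ρ = T (b⁻¹ • ρ) := (PH hbij hadd hmul hρ hbinv).symm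
  have hSχ : Sinv hbij χ = cmin (Sinv hbij ψ₀.1) (b⁻¹ • ρ) := by
    rw [hχ, hPH, Sinv_cmin hbij hadd hmul ψ₀.2.1 (hbij.mapsTo (fun x => mul_nonneg hbinv (hρ x))),
      Sinv_T hbij (fun x => mul_nonneg hbinv (hρ x))]
  have hxχ : δ ≤ Sinv hbij χ x := Set.mem_iInter.1 hx ⟨χ, hχ0, hχy, hχnorm⟩
  rw [hSχ] at hxχ
  simp only [cmin_apply, le_min_iff, my_smul_apply] at hxχ
  have h2 := hxχ.2
  calc δ * b = b * δ := by ring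
    _ ≤ b * (b⁻¹ * ρ x) := by nlinarith
    _ = ρ x := by field_simp

/-- product lower bound -/
theorem ProdLower {ψ : C₀(Y, ℝ)} (hψ : ∀ y', 0 ≤ ψ y') {δ : ℝ} (hδ : 0 < δ)
    {f : C₀(X, ℝ)} (hf : ∀ x, 0 ≤ f x)
    (h1f : ∀ x, δ ≤ Sinv hbij ψ x → 1 ≤ f x) :
    ‖ψ‖ - δ ≤ ‖T f * ψ‖ := by
  set g := Sinv hbij ψ with hgdef
  have hg0 : ∀ x, 0 ≤ g x := Sinv_mem hbij hψ
  have hTg : T g = ψ := T_Sinv hbij hψ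
  set m := cminC g δ hδ.le with hmdef
  have hm0 : ∀ x, 0 ≤ m x := fun x => le_min (hg0 x) hδ.le
  set gδ := g - m with hgδdef
  have hgδ0 : ∀ x, 0 ≤ gδ x := fun x => by
    simp only [hgδdef, ZeroAtInftyContinuousMap.sub_apply, hmdef, cminC_apply, sub_nonneg]
    exact min_le_left _ _
  have hsplit : gδ + m = g := by
    ext x
    simp only [ZeroAtInftyContinuousMap.add_apply, hgδdef, ZeroAtInftyContinuousMap.sub_apply]
    ring
  have hsubadd : ‖T g‖ ≤ ‖T gδ‖ + ‖T m‖ := by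
    rw [← hsplit]
    exact L_subadd hadd hgδ0 hm0
  have hTm : ‖T m‖ ≤ δ := by
    refine (L_le_norm hbij hadd hmul hm0).trans ?_
    exact my_norm_le_of_nonneg _ hδ.le hm0 fun x => by
      simp only [hmdef, cminC_apply]; exact min_le_right _ _
  have hgle : ∀ x, gδ x ≤ (f * g) x := by
    intro x
    simp only [hgδdef, ZeroAtInftyContinuousMap.sub_apply, hmdef, cminC_apply,
      ZeroAtInftyContinuousMap.mul_apply]
    rcases le_or_gt δ (g x) with h | h
    · rw [min_eq_right h]
      have h1 : 1 ≤ f x := h1f x h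
      nlinarith [hg0 x]
    · rw [min_eq_left h.le]
      simp only [sub_self]
      exact mul_nonneg (hf x) (hg0 x)
  have h2 : ‖T gδ‖ ≤ ‖T (f * g)‖ :=
    L_mono hbij hadd hgδ0 (fun x => mul_nonneg (hf x) (hg0 x)) hgle
  have h3 : ‖T (f * g)‖ = ‖T f * ψ‖ := by rw [hmul _ _ hf hg0, hTg]
  rw [hTg] at hsubadd
  linarith [hsubadd, hTm, h2, h3.symm.le, h3.le]

/-- main lower bound via superlevel sets -/
theorem MLB {y : Y} {δ : ℝ} (hδ0 : 0 < δ) (hδ1 : δ < 1) {f : C₀(X, ℝ)}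
    (hf : ∀ x, 0 ≤ f x) {U : Set X} (hUopen : IsOpen U)
    (hsub : (⋂ ψ : PyIdx (Y := Y) y, {x | δ ≤ Sinv hbij ψ.1 x}) ⊆ U)
    (h1f : ∀ x ∈ U, 1 ≤ f x) : 1 - δ ≤ T f y := by
  -- find a single ψ₀ whose superlevel set is inside U
  have hdir : Directed (· ⊇ ·) (fun ψ : PyIdx (Y := Y) y => {x | δ ≤ Sinv hbij ψ.1 x}) := by
    intro ψ₁ ψ₂
    refine ⟨⟨cmin ψ₁.1 ψ₂.1, Py_cmin ψ₁ ψ₂⟩, ?_, ?_⟩ <;>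
    · intro x hx
      simp only [Set.mem_setOf_eq] at hx ⊢
      rw [Sinv_cmin hbij hadd hmul ψ₁.2.1 ψ₂.2.1] at hx
      simp only [cmin_apply, le_min_iff] at hx
      first
        | exact hx.1
        | exact hx.2
  obtain ⟨ψ₀, hψ₀U⟩ := my_directed_subset _ hdir
    (fun ψ => Sinv_superlevel_nonempty hbij hadd hmul ψ hδ1.le)
    (fun ψ => my_superlevel_compact _ hδ0)
    (fun ψ => isClosed_le continuous_const (Sinv hbij ψ.1).continuous) hUopen hsub
  by_contra hcon
  push_neg at hcon
  set γ := (1 - δ - T f y) / 2 with hγ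
  have hTfy0 : 0 ≤ T f y := hbij.mapsTo hf y
  have hγpos : 0 < γ := by simp only [hγ]; linarith
  set W : Set Y := {y' | T f y' < 1 - δ - γ} with hW
  have hWopen : IsOpen W := isOpen_lt (T f).continuous continuous_const
  have hyW : y ∈ W := by simp only [hW, Set.mem_setOf_eq]; linarith
  obtain ⟨φ, hφ0, hφ1, hφy, hφout, hφnorm⟩ := my_bump_pt hWopen hyW
  set ψφ : PyIdx (Y := Y) y := ⟨φ, hφ0, hφy, hφnorm⟩ with hψφ
  set χ : C₀(Y, ℝ) := cmin ψ₀.1 φ with hχ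
  obtain ⟨hχ0, hχy, hχnorm⟩ := Py_cmin ψ₀ ψφ
  have hSχ : Sinv hbij χ = cmin (Sinv hbij ψ₀.1) (Sinv hbij φ) :=
    Sinv_cmin hbij hadd hmul ψ₀.2.1 hφ0
  have hlow : 1 - δ ≤ ‖T f * χ‖ := by
    have := ProdLower hbij hadd hmul hχ0 hδ0 hf (fun x hx => by
      rw [hSχ] at hx
      simp only [cmin_apply, le_min_iff] at hx
      exact h1f x (hψ₀U hx.1))
    rw [hχnorm] at this
    exact this
  have hup : ‖T f * χ‖ ≤ 1 - δ - γ := by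
    refine my_norm_le_of_nonneg _ (by linarith) (fun y' =>
      mul_nonneg (hbij.mapsTo hf y') (hχ0 y')) fun y' => ?_
    show T f y' * χ y' ≤ 1 - δ - γ
    by_cases hy' : y' ∈ W
    · have h1 : T f y' < 1 - δ - γ := hy'
      have h2 : χ y' ≤ 1 := by
        simp only [hχ, cmin_apply]
        exact (min_le_right _ _).trans (hφ1 y')
      nlinarith [hbij.mapsTo hf y', hχ0 y']
    · have : χ y' = 0 := le_antisymm (by
        simp only [hχ, cmin_apply]
        exact (min_le_right _ _).trans (le_of_eq (hφout y' hy'))) (hχ0 y')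
      rw [this, mul_zero]
      linarith
  linarith

/-- step a : some superlevel-intersection is inside any open neighborhood of K_y -/
theorem stepA {y : Y} {V : Set X} (hVopen : IsOpen V) (hKV : KK hbij y ⊆ V) :
    ∃ δ₀ : ℝ, 0 < δ₀ ∧ δ₀ < 1 ∧
      (⋂ ψ : PyIdx (Y := Y) y, {x | δ₀ ≤ Sinv hbij ψ.1 x}) ⊆ V := by
  classical
  set ι := PyIdx (Y := Y) y × {δ : ℝ // 0 < δ ∧ δ < 1} with hι
  haveI : Nonempty ι := ⟨⟨Classical.arbitrary _, ⟨(1:ℝ)/2, by norm_num, by norm_num⟩⟩⟩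
  set t : ι → Set X := fun p => {x | p.2.1 ≤ Sinv hbij p.1.1 x} with ht
  have hdir : Directed (· ⊇ ·) t := by
    rintro ⟨ψ₁, δ₁⟩ ⟨ψ₂, δ₂⟩
    refine ⟨⟨⟨cmin ψ₁.1 ψ₂.1, Py_cmin ψ₁ ψ₂⟩, ⟨max δ₁.1 δ₂.1,
      lt_max_of_lt_left δ₁.2.1, max_lt δ₁.2.2 δ₂.2.2⟩⟩, ?_, ?_⟩ <;>
    · intro x hx
      simp only [ht, Set.mem_setOf_eq] at hx ⊢
      rw [Sinv_cmin hbij hadd hmul ψ₁.2.1 ψ₂.2.1] at hx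
      simp only [cmin_apply, le_min_iff, max_le_iff] at hx
      first
        | exact hx.1.1
        | exact hx.2.2
  have hInt : ⋂ p : ι, t p ⊆ KK hbij y := by
    intro x hx
    simp only [Set.mem_iInter] at hx
    refine Set.mem_iInter.2 fun ψ => ?_
    simp only [Set.mem_setOf_eq]
    set v := Sinv hbij ψ.1 x with hv
    have hall : ∀ δ : ℝ, 0 < δ → δ < 1 → δ ≤ v := fun δ h1 h2 =>
      hx ⟨ψ, ⟨δ, h1, h2⟩⟩
    by_contra hvlt
    push_neg at hvlt
    have hvhalf : (1:ℝ)/2 ≤ v := hall (1/2) (by norm_num) (by norm_num)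
    have h0v : 0 < v := by linarith
    have := hall ((v + 1)/2) (by linarith) (by linarith)
    linarith
  obtain ⟨⟨ψ₁, δ₀⟩, hp⟩ := my_directed_subset t hdir
    (fun p => Sinv_superlevel_nonempty hbij hadd hmul p.1 p.2.2.2.le)
    (fun p => my_superlevel_compact _ p.2.2.1)
    (fun p => isClosed_le continuous_const (Sinv hbij p.1.1).continuous)
    hVopen (hInt.trans hKV)
  exact ⟨δ₀.1, δ₀.2.1, δ₀.2.2, fun x hx => hp (Set.mem_iInter.1 hx ψ₁)⟩

/-- basic lower bound : if f ≥ 1 on an open neighborhood of K_y then T f y ≥ 1 -/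
theorem LOWERbasic {y : Y} {f : C₀(X, ℝ)} (hf : ∀ x, 0 ≤ f x) {W : Set X}
    (hWopen : IsOpen W) (hKW : KK hbij y ⊆ W) (h1f : ∀ x ∈ W, 1 ≤ f x) :
    1 ≤ T f y := by
  obtain ⟨hKne, hKcp⟩ := KK_nonempty_compact hbij hadd hmul y
  obtain ⟨M, hMcp, hKM, hMW⟩ := exists_compact_between hKcp hWopen hKW
  obtain ⟨ρ₀, hρ₀0, hρ₀1, hρ₀M, hρ₀out⟩ := my_bump hMcp hWopen hMW
  obtain ⟨δ₀, hδ₀0, hδ₀1, hδ₀sub⟩ := stepA hbij hadd hmul isOpen_interior hKM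
  have hb₀ : 1 - δ₀ ≤ T ρ₀ y :=
    MLB hbij hadd hmul hδ₀0 hδ₀1 hρ₀0 isOpen_interior hδ₀sub
      (fun x hx => le_of_eq (hρ₀M x (interior_subset hx)).symm)
  have hb₀pos : 0 < T ρ₀ y := lt_of_lt_of_le (by linarith) hb₀
  have hfinal : ∀ δ : ℝ, 0 < δ → δ < 1 → 1 - δ ≤ T f y := by
    intro δ h1 h2
    refine MLB hbij hadd hmul h1 h2 hf (U := {x | (0:ℝ) < ρ₀ x})
      (isOpen_lt continuous_const ρ₀.continuous) (fun x hx => ?_) (fun x hx => ?_)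
    · have := LOC hbij hadd hmul hρ₀0 hb₀pos h1 hx
      simp only [Set.mem_setOf_eq]
      nlinarith
    · have hxW : x ∈ W := by
        by_contra h
        have hx' : (0:ℝ) < ρ₀ x := hx
        rw [hρ₀out x h] at hx'
        exact lt_irrefl 0 hx'
      exact h1f x hxW
  by_contra hc
  push_neg at hc
  have hTfy0 : 0 ≤ T f y := hbij.mapsTo hf y
  have := hfinal ((1 - T f y)/2) (by linarith) (by linarith)
  linarith

/-- THE FORMULA : T f y = f x for the (unique) point x of K_y -/
theorem FORMULA (y : Y) : ∃ x : X, x ∈ KK hbij y ∧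
    ∀ f : C₀(X, ℝ), (∀ x', 0 ≤ f x') → T f y = f x := by
  obtain ⟨⟨x₁, hx₁⟩, -⟩ := KK_nonempty_compact hbij hadd hmul y
  refine ⟨x₁, hx₁, fun f hf => ?_⟩
  refine le_antisymm (UPPER hbij hadd hmul hf y hx₁) ?_
  by_contra hcon
  push_neg at hcon
  set c := (T f y + f x₁)/2 with hcdef
  have hTfy0 : 0 ≤ T f y := hbij.mapsTo hf y
  have hc1 : T f y < c := by simp only [hcdef]; linarith
  have hc2 : c < f x₁ := by simp only [hcdef]; linarith
  have hcpos : 0 < c := by linarith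
  set W₀ : Set Y := {y' | T f y' < c} with hW₀def
  have hW₀open : IsOpen W₀ := isOpen_lt (T f).continuous continuous_const
  have hyW₀ : y ∈ W₀ := hc1
  obtain ⟨ψ, hψ0, hψ1, hψy, hψout, hψnorm⟩ := my_bump_pt hW₀open hyW₀
  set g := Sinv hbij ψ with hgdef
  have hg0 : ∀ x, 0 ≤ g x := Sinv_mem hbij hψ0
  have hTg : T g = ψ := T_Sinv hbij hψ0
  have hgx₁ : 1 ≤ g x₁ := Set.mem_iInter.1 hx₁ ⟨ψ, hψ0, hψy, hψnorm⟩
  set V : Set X := {x | c < f x} ∩ {x | 1/2 < g x} with hVdef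
  have hVopen : IsOpen V :=
    (isOpen_lt continuous_const f.continuous).inter (isOpen_lt continuous_const g.continuous)
  have hx₁V : x₁ ∈ V := ⟨hc2, by simp only [Set.mem_setOf_eq]; linarith⟩
  obtain ⟨ρ₁, hρ₁0, hρ₁1, hρ₁x₁, hρ₁out, hρ₁norm⟩ := my_bump_pt hVopen hx₁V
  have hρ₁ne : ρ₁ ≠ 0 := by
    intro h0
    have : ρ₁ x₁ = 0 := by rw [h0]; rfl
    rw [hρ₁x₁] at this; norm_num at this
  obtain ⟨y₁, hy₁⟩ := my_exists_pos (hbij.mapsTo hρ₁0) (L_ne0 hbij hadd hρ₁0 hρ₁ne)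
  have hKy₁V : KK hbij y₁ ⊆ V := by
    intro x hx
    have h := UPPER hbij hadd hmul hρ₁0 y₁ hx
    have hpos : 0 < ρ₁ x := lt_of_lt_of_le hy₁ h
    by_contra hxV
    rw [hρ₁out x hxV] at hpos
    exact lt_irrefl 0 hpos
  have hA : c ≤ T f y₁ := by
    have hinv : (0:ℝ) ≤ c⁻¹ := inv_nonneg.2 hcpos.le
    have h := LOWERbasic hbij hadd hmul
      (f := c⁻¹ • f) (fun x => mul_nonneg hinv (hf x)) hVopen hKy₁V
      (fun x hx => by
        have hcf : c < f x := hx.1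
        show 1 ≤ c⁻¹ * f x
        rw [← inv_mul_cancel₀ (ne_of_gt hcpos)]
        exact mul_le_mul_of_nonneg_left hcf.le hinv)
    rw [PH hbij hadd hmul hf hinv] at h
    have h2 : (1:ℝ) ≤ c⁻¹ * T f y₁ := h
    calc c = c * 1 := (mul_one c).symm
      _ ≤ c * (c⁻¹ * T f y₁) := by nlinarith
      _ = T f y₁ := by field_simp
  have hB : (1:ℝ)/2 ≤ ψ y₁ := by
    have h := LOWERbasic hbij hadd hmul
      (f := (2:ℝ) • g) (fun x => mul_nonneg (by norm_num) (hg0 x)) hVopen hKy₁V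
      (fun x hx => by
        have h2 : (1:ℝ)/2 < g x := hx.2
        show 1 ≤ 2 * g x
        linarith)
    rw [PH hbij hadd hmul hg0 (by norm_num : (0:ℝ) ≤ 2), hTg] at h
    have h2 : (1:ℝ) ≤ 2 * ψ y₁ := h
    linarith
  have hy₁W₀ : y₁ ∈ W₀ := by
    by_contra h
    rw [hψout y₁ h] at hB
    linarith
  have : T f y₁ < c := hy₁W₀
  linarith

/-- uniqueness of the representing point -/
theorem UNIQ (y : Y) {x₁ x₂ : X}
    (h₁ : ∀ f : C₀(X, ℝ), (∀ x', 0 ≤ f x') → T f y = f x₁)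
    (h₂ : ∀ f : C₀(X, ℝ), (∀ x', 0 ≤ f x') → T f y = f x₂) : x₁ = x₂ := by
  by_contra hne
  have hopen : IsOpen ({x₂}ᶜ : Set X) := isOpen_compl_singleton
  obtain ⟨f, hf0, hf1, hfx₁, hfout, hfnorm⟩ := my_bump_pt hopen
    (by simp [hne] : x₁ ∈ ({x₂}ᶜ : Set X))
  have h12 : f x₁ = f x₂ := ((h₁ f hf0).symm.trans (h₂ f hf0))
  rw [hfx₁, hfout x₂ (by simp)] at h12
  norm_num at h12

end Kset

end Main

/-- Main theorem: a bijection between positive cones of `C₀` spaces which is additive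
and multiplicative in norm is a composition operator induced by a homeomorphism. -/
theorem main_theorem {X Y : Type*}
    [TopologicalSpace X] [LocallyCompactSpace X] [T2Space X]
    [TopologicalSpace Y] [LocallyCompactSpace Y] [T2Space Y]
    (T : C₀(X, ℝ) → C₀(Y, ℝ))
    (hbij : Set.BijOn T {f : C₀(X, ℝ) | ∀ x, 0 ≤ f x} {g : C₀(Y, ℝ) | ∀ y, 0 ≤ g y})
    (hadd : ∀ f g : C₀(X, ℝ), (∀ x, 0 ≤ f x) → (∀ x, 0 ≤ g x) →
      ‖T (f + g)‖ = ‖T f + T g‖)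
    (hmul : ∀ f g : C₀(X, ℝ), (∀ x, 0 ≤ f x) → (∀ x, 0 ≤ g x) →
      ‖T (f * g)‖ = ‖T f * T g‖) :
    ∃ τ : Y ≃ₜ X, ∀ f : C₀(X, ℝ), (∀ x, 0 ≤ f x) → ∀ y : Y, T f y = f (τ y) := by
  classical
  -- the map
  set τr : Y → X := fun y => (FORMULA hbij hadd hmul y).choose with hτr
  have hτ : ∀ y, ∀ f : C₀(X, ℝ), (∀ x', 0 ≤ f x') → T f y = f (τr y) := fun y =>
    (FORMULA hbij hadd hmul y).choose_spec.2
  -- injectivity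
  have hinj : Function.Injective τr := by
    intro y₁ y₂ h
    by_contra hne
    have hopen : IsOpen ({y₂}ᶜ : Set Y) := isOpen_compl_singleton
    obtain ⟨u, hu0, hu1, huy₁, huout, hunorm⟩ := my_bump_pt hopen
      (by simp [hne] : y₁ ∈ ({y₂}ᶜ : Set Y))
    have e1 : u y₁ = Sinv hbij u (τr y₁) := by
      have := hτ y₁ (Sinv hbij u) (Sinv_mem hbij hu0)
      rwa [T_Sinv hbij hu0] at this
    have e2 : u y₂ = Sinv hbij u (τr y₂) := by
      have := hτ y₂ (Sinv hbij u) (Sinv_mem hbij hu0)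
      rwa [T_Sinv hbij hu0] at this
    rw [h] at e1
    have : u y₁ = u y₂ := e1.trans e2.symm
    rw [huy₁, huout y₂ (by simp)] at this
    norm_num at this
  -- continuity
  have hcont : Continuous τr := by
    rw [continuous_iff_continuousAt]
    intro y₀
    rw [ContinuousAt, tendsto_nhds]
    intro V hVopen hmem
    obtain ⟨ρ, hρ0, hρ1, hρx, hρout, hρnorm⟩ := my_bump_pt hVopen hmem
    have hTρy₀ : T ρ y₀ = 1 := by rw [hτ y₀ ρ hρ0, hρx]
    have hOn : IsOpen {y | (1:ℝ)/2 < T ρ y} := isOpen_lt continuous_const (T ρ).continuous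
    have hmem2 : {y | (1:ℝ)/2 < T ρ y} ∈ nhds y₀ :=
      hOn.mem_nhds (by simp only [Set.mem_setOf_eq, hTρy₀]; norm_num)
    filter_upwards [hmem2] with y hy
    have h2 : (1:ℝ)/2 < ρ (τr y) := by
      have := hτ y ρ hρ0
      rw [← this]
      exact hy
    by_contra hV
    rw [hρout (τr y) hV] at h2
    norm_num at h2
  -- surjectivity
  have hsurj : Function.Surjective τr := by
    intro x₀
    obtain ⟨N, hNc, hNmem⟩ := exists_compact_mem_nhds x₀
    obtain ⟨ρ, hρ0, hρ1, hρN, hρout⟩ := my_bump hNc isOpen_univ (Set.subset_univ N)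
    set D : Set Y := {y | 1 ≤ T ρ y} with hD
    have hDc : IsCompact D := my_superlevel_compact (T ρ) one_pos
    have hτD : IsClosed (τr '' D) := (hDc.image hcont).isClosed
    by_contra hx₀
    push_neg at hx₀
    have hx₀' : x₀ ∉ τr '' D := by
      rintro ⟨y, hyD, hyx⟩
      exact hx₀ y hyx
    set O : Set X := (τr '' D)ᶜ ∩ interior N with hO
    have hOopen : IsOpen O := hτD.isOpen_compl.inter isOpen_interior
    have hx₀O : x₀ ∈ O := ⟨hx₀', mem_interior_iff_mem_nhds.2 hNmem⟩
    obtain ⟨h, hh0, hh1, hhx₀, hhout, hhnorm⟩ := my_bump_pt hOopen hx₀O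
    have hhne : h ≠ 0 := by
      intro h0
      have : h x₀ = 0 := by rw [h0]; rfl
      rw [hhx₀] at this; norm_num at this
    obtain ⟨y₂, hy₂⟩ := my_exists_pos (hbij.mapsTo hh0) (L_ne0 hbij hadd hh0 hhne)
    have hτy₂O : τr y₂ ∈ O := by
      have : 0 < h (τr y₂) := by
        rw [← hτ y₂ h hh0]
        exact hy₂
      by_contra hO'
      rw [hhout (τr y₂) hO'] at this
      exact lt_irrefl 0 this
    have hy₂D : y₂ ∈ D := by
      have hτN : τr y₂ ∈ N := interior_subset hτy₂O.2
      have : T ρ y₂ = 1 := by rw [hτ y₂ ρ hρ0, hρN (τr y₂) hτN]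
      simp only [hD, Set.mem_setOf_eq, this, le_refl]
    exact hτy₂O.1 ⟨y₂, hy₂D, rfl⟩
  -- closed map
  have hclosed : IsClosedMap τr := by
    intro C hC
    refine isClosed_of_closure_subset fun x₀ hx₀ => ?_
    obtain ⟨N, hNc, hNmem⟩ := exists_compact_mem_nhds x₀
    obtain ⟨ρ, hρ0, hρ1, hρN, hρout⟩ := my_bump hNc isOpen_univ (Set.subset_univ N)
    set D : Set Y := {y | 1 ≤ T ρ y} with hD
    have hDc : IsCompact D := my_superlevel_compact (T ρ) one_pos
    have himg : IsClosed (τr '' (D ∩ C)) := ((hDc.inter_right hC).image hcont).isClosed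
    have hxin : x₀ ∈ τr '' (D ∩ C) := by
      by_contra hx₀'
      set O : Set X := (τr '' (D ∩ C))ᶜ ∩ interior N with hO
      have hOopen : IsOpen O := himg.isOpen_compl.inter isOpen_interior
      have hx₀O : x₀ ∈ O := ⟨hx₀', mem_interior_iff_mem_nhds.2 hNmem⟩
      obtain ⟨x', hx'O, hx'C⟩ := mem_closure_iff.1 hx₀ O hOopen hx₀O
      obtain ⟨y, hyC, hyx'⟩ := hx'C
      have hτN : τr y ∈ N := by
        rw [hyx']
        exact interior_subset hx'O.2
      have hyD : y ∈ D := by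
        have : T ρ y = 1 := by rw [hτ y ρ hρ0, hρN (τr y) hτN]
        simp only [hD, Set.mem_setOf_eq, this, le_refl]
      have : x' ∈ τr '' (D ∩ C) := ⟨y, ⟨hyD, hyC⟩, hyx'⟩
      exact hx'O.1 this
    exact (Set.image_mono Set.inter_subset_right) hxin
  -- build the homeomorphism
  set e : Y ≃ X := Equiv.ofBijective τr ⟨hinj, hsurj⟩ with he
  have hinvcont : Continuous e.symm := by
    rw [continuous_iff_isClosed]
    intro C hC
    have himg : e.symm ⁻¹' C = τr '' C := by
      rw [← Equiv.image_eq_preimage_symm]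
      rfl
    rw [himg]
    exact hclosed C hC
  exact ⟨⟨e, hcont, hinvcont⟩, fun f hf y => hτ y f hf⟩
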